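/- Let n ≥ 1 and let ω_1, …, ω_n be pairwise distinct complex numbers, none of which lies on the real segment [0,1] ⊆ ℂ. Then for every natural number m, the complex-valued integral ∫_0^1 x^m / ∏_{i=1}^n (x − ω_i) dx equals Σ_{i=1}^n g_m(ω_i) / ∏_{j≠i} (ω_i − ω_j). -/

import Mathlib

open Complex Finset

/-- `g m ω = ω^m (Log(1 - 1/ω) + ∑_{k=1}^m 1/(k ω^k))`. -/
noncomputable def g (m : ℕ) (ω : ℂ) : ℂ :=
  ω ^ m * (Complex.log (1 - 1 / ω) + ∑ k ∈ Finset.Icc 1 m, 1 / ((k : ℂ) * ω ^ k))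

/-- Points off the segment `[0,1]` give values in the slit plane. -/
lemma slit_aux (ω : ℂ) (hω : ∀ x : ℝ, x ∈ Set.Icc (0 : ℝ) 1 → ω ≠ (x : ℂ))
    (x : ℝ) (hx : x ∈ Set.Icc (0 : ℝ) 1) : 1 - (x : ℂ) / ω ∈ Complex.slitPlane := by
  have hω0 : ω ≠ 0 := by
    intro h
    exact hω 0 ⟨le_refl _, zero_le_one⟩ (by simp [h])
  by_contra hcon
  rw [Complex.mem_slitPlane_iff, not_or, not_lt, not_ne_iff] at hcon
  obtain ⟨hre, him⟩ := hcon
  set r : ℝ := (1 - (x : ℂ) / ω).re with hr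
  have hzr : 1 - (x : ℂ) / ω = (r : ℂ) := Complex.ext (by simp [hr]) (by simp [him])
  have hxr : (x : ℂ) / ω = 1 - (r : ℂ) := by linear_combination -hzr
  have h1 : (1 : ℝ) ≤ 1 - r := by linarith
  have hne : (1 - r : ℝ) ≠ 0 := by linarith
  have hcast : ((1 - r : ℝ) : ℂ) ≠ 0 := Complex.ofReal_ne_zero.2 hne
  have hx2 : (x : ℂ) = (1 - (r : ℂ)) * ω := (div_eq_iff hω0).1 hxr
  have hωeq : ω = ((x / (1 - r) : ℝ) : ℂ) := by
    push_cast at hcast ⊢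
    rw [eq_div_iff hcast]
    linear_combination -hx2
  exact hω _ ⟨div_nonneg hx.1 (by linarith),
    le_trans (div_le_self hx.1 h1) hx.2⟩ hωeq

lemma integral_one_div_sub (ω : ℂ) (hω : ∀ x : ℝ, x ∈ Set.Icc (0 : ℝ) 1 → ω ≠ (x : ℂ)) :
    (∫ x in (0:ℝ)..1, 1 / ((x : ℂ) - ω)) = Complex.log (1 - 1 / ω) := by
  have hω0 : ω ≠ 0 := by
    intro h
    exact hω 0 ⟨le_refl _, zero_le_one⟩ (by simp [h])
  have hsub : ∀ x : ℝ, x ∈ Set.Icc (0 : ℝ) 1 → (x : ℂ) - ω ≠ 0 := by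
    intro x hx h
    exact hω x hx (by linear_combination -h)
  have huIcc : Set.uIcc (0 : ℝ) 1 = Set.Icc (0 : ℝ) 1 := Set.uIcc_of_le zero_le_one
  have hderiv : ∀ x ∈ Set.uIcc (0 : ℝ) 1,
      HasDerivAt (fun y : ℝ => Complex.log (1 - (y : ℂ) / ω)) (1 / ((x : ℂ) - ω)) x := by
    intro x hx
    rw [huIcc] at hx
    have hin : HasDerivAt (fun z : ℂ => 1 - z / ω) (-ω⁻¹) (x : ℂ) := by
      simpa using ((hasDerivAt_id (x : ℂ)).div_const ω).const_sub 1
    have hlog := (Complex.hasDerivAt_log (slit_aux ω hω x hx)).comp (x : ℂ) hin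
    have := hlog.comp_ofReal
    convert this using 1
    · rfl
    have h1 : (x : ℂ) - ω ≠ 0 := hsub x hx
    have h4 : ω - (x : ℂ) ≠ 0 := fun h => h1 (by linear_combination -h)
    have h3 : 1 - (x : ℂ) / ω = (ω - (x : ℂ)) / ω := by field_simp
    rw [h3, inv_div, div_mul_eq_mul_div, mul_neg, mul_inv_cancel₀ hω0,
      div_eq_div_iff h1 h4]
    ring
  have hint : IntervalIntegrable (fun x : ℝ => 1 / ((x : ℂ) - ω)) MeasureTheory.volume 0 1 := by
    apply ContinuousOn.intervalIntegrable
    rw [huIcc]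
    exact continuousOn_const.div
      ((Complex.continuous_ofReal.continuousOn).sub continuousOn_const) hsub
  rw [intervalIntegral.integral_eq_sub_of_hasDerivAt hderiv hint]
  norm_num

set_option maxHeartbeats 1000000 in
lemma integral_single_pole (m : ℕ) (ω : ℂ)
    (hω : ∀ x : ℝ, x ∈ Set.Icc (0 : ℝ) 1 → ω ≠ (x : ℂ)) :
    (∫ x in (0:ℝ)..1, (x : ℂ) ^ m / ((x : ℂ) - ω)) = g m ω := by
  have hω0 : ω ≠ 0 := by
    intro h
    exact hω 0 ⟨le_refl _, zero_le_one⟩ (by simp [h])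
  have hsub : ∀ x : ℝ, x ∈ Set.Icc (0 : ℝ) 1 → (x : ℂ) - ω ≠ 0 := by
    intro x hx h
    exact hω x hx (by linear_combination -h)
  have huIcc : Set.uIcc (0 : ℝ) 1 = Set.Icc (0 : ℝ) 1 := Set.uIcc_of_le zero_le_one
  -- pointwise decomposition
  have hpt : ∀ x : ℝ, x ∈ Set.Icc (0 : ℝ) 1 →
      (x : ℂ) ^ m / ((x : ℂ) - ω)
        = ω ^ m * (1 / ((x : ℂ) - ω)) + ∑ i ∈ Finset.range m, (x : ℂ) ^ i * ω ^ (m - 1 - i) := by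
    intro x hx
    have h1 : (x : ℂ) - ω ≠ 0 := hsub x hx
    have key : (x : ℂ) ^ m / ((x : ℂ) - ω) - ω ^ m / ((x : ℂ) - ω)
        = ∑ i ∈ Finset.range m, (x : ℂ) ^ i * ω ^ (m - 1 - i) := by
      rw [div_sub_div_same, ← geom_sum₂_mul (x : ℂ) ω m, mul_div_assoc, div_self h1, mul_one]
    linear_combination key
  -- integrability of the pieces
  have hint1 : IntervalIntegrable (fun x : ℝ => ω ^ m * (1 / ((x : ℂ) - ω)))
      MeasureTheory.volume 0 1 := by
    apply ContinuousOn.intervalIntegrable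
    rw [huIcc]
    exact continuousOn_const.mul (continuousOn_const.div
      ((Complex.continuous_ofReal.continuousOn).sub continuousOn_const) hsub)
  have hint2 : ∀ i ∈ Finset.range m, IntervalIntegrable
      (fun x : ℝ => (x : ℂ) ^ i * ω ^ (m - 1 - i)) MeasureTheory.volume 0 1 := by
    intro i _
    exact ((Complex.continuous_ofReal.pow i).mul continuous_const).intervalIntegrable 0 1
  have hint2' : IntervalIntegrable
      (fun x : ℝ => ∑ i ∈ Finset.range m, (x : ℂ) ^ i * ω ^ (m - 1 - i))
      MeasureTheory.volume 0 1 :=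
    (continuous_finset_sum _ fun i _ =>
      (Complex.continuous_ofReal.pow i).mul continuous_const).intervalIntegrable 0 1
  rw [intervalIntegral.integral_congr (g := fun x : ℝ =>
      ω ^ m * (1 / ((x : ℂ) - ω)) + ∑ i ∈ Finset.range m, (x : ℂ) ^ i * ω ^ (m - 1 - i))
      (by rw [Set.EqOn]; intro x hx; rw [huIcc] at hx; exact hpt x hx)]
  rw [intervalIntegral.integral_add hint1 hint2',
    intervalIntegral.integral_finset_sum hint2,
    intervalIntegral.integral_const_mul, integral_one_div_sub ω hω]
  have hxi : ∀ i : ℕ, (∫ x in (0:ℝ)..1, (x : ℂ) ^ i * ω ^ (m - 1 - i))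
      = ω ^ (m - 1 - i) * (1 / ((i : ℂ) + 1)) := by
    intro i
    rw [intervalIntegral.integral_mul_const]
    have : (∫ x in (0:ℝ)..1, (x : ℂ) ^ i) = ((∫ x in (0:ℝ)..1, x ^ i : ℝ) : ℂ) := by
      rw [← intervalIntegral.integral_ofReal]
      norm_num
    rw [this, integral_pow]
    push_cast
    ring
  simp only [hxi]
  rw [g, mul_add]
  congr 1
  rw [Finset.mul_sum]
  refine Finset.sum_bij' (fun i _ => i + 1) (fun k _ => k - 1) ?_ ?_ ?_ ?_ ?_
  · intro a ha
    rw [Finset.mem_range] at ha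
    rw [Finset.mem_Icc]
    omega
  · intro a ha
    rw [Finset.mem_Icc] at ha
    rw [Finset.mem_range]
    omega
  · intro a ha
    omega
  · intro a ha
    rw [Finset.mem_Icc] at ha
    omega
  · intro a ha
    rw [Finset.mem_range] at ha
    have h1 : ω ^ (m - 1 - a) * ω ^ (a + 1) = ω ^ m := by
      rw [← pow_add]
      congr 1
      omega
    have h2 : ((a : ℂ) + 1) ≠ 0 := by
      exact_mod_cast (Nat.cast_ne_zero (R := ℂ)).mpr (Nat.succ_ne_zero a)
    have h3 : ω ^ (a + 1) ≠ 0 := pow_ne_zero _ hω0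
    push_cast
    rw [← h1]
    field_simp

lemma partial_frac (n : ℕ) (hn : 1 ≤ n) (ω : Fin n → ℂ) (hdist : Function.Injective ω)
    (z : ℂ) (hz : ∀ i, z ≠ ω i) (m : ℕ) :
    z ^ m / ∏ i, (z - ω i) =
      ∑ i, (z ^ m / (z - ω i)) / ∏ j ∈ Finset.univ.erase i, (ω i - ω j) := by
  have hne : ∀ i, z - ω i ≠ 0 := fun i => sub_ne_zero.2 (hz i)
  have hbasis := Lagrange.sum_basis (v := ω) (s := Finset.univ) hdist.injOn
    ⟨⟨0, hn⟩, Finset.mem_univ _⟩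
  have h1 : (1 : ℂ) = ∑ i, ∏ j ∈ Finset.univ.erase i, ((ω i - ω j)⁻¹ * (z - ω j)) := by
    have h := congrArg (Polynomial.eval z) hbasis
    rw [Polynomial.eval_finset_sum, Polynomial.eval_one] at h
    rw [← h]
    apply Finset.sum_congr rfl
    intro i _
    rw [Lagrange.basis, Polynomial.eval_prod]
    apply Finset.prod_congr rfl
    intro j _
    simp [Lagrange.basisDivisor]
  have key : ∀ i : Fin n, z ^ m * (∏ i, (z - ω i))⁻¹ *
      ∏ j ∈ Finset.univ.erase i, ((ω i - ω j)⁻¹ * (z - ω j))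
        = (z ^ m / (z - ω i)) / ∏ j ∈ Finset.univ.erase i, (ω i - ω j) := by
    intro i
    have hpe : (∏ j ∈ Finset.univ.erase i, (z - ω j)) ≠ 0 :=
      Finset.prod_ne_zero_iff.2 fun j _ => hne j
    rw [← Finset.mul_prod_erase _ _ (Finset.mem_univ i), Finset.prod_mul_distrib, mul_inv,
      div_eq_mul_inv, div_eq_mul_inv, Finset.prod_inv_distrib]
    linear_combination (z ^ m * (z - ω i)⁻¹ *
      (∏ j ∈ Finset.univ.erase i, (ω i - ω j))⁻¹) * (inv_mul_cancel₀ hpe)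
  calc z ^ m / ∏ i, (z - ω i)
      = z ^ m * (∏ i, (z - ω i))⁻¹ *
        ∑ i, ∏ j ∈ Finset.univ.erase i, ((ω i - ω j)⁻¹ * (z - ω j)) := by
        rw [← h1, mul_one, div_eq_mul_inv]
    _ = ∑ i, z ^ m * (∏ i, (z - ω i))⁻¹ *
        ∏ j ∈ Finset.univ.erase i, ((ω i - ω j)⁻¹ * (z - ω j)) := by
        rw [Finset.mul_sum]
    _ = ∑ i, (z ^ m / (z - ω i)) / ∏ j ∈ Finset.univ.erase i, (ω i - ω j) :=
        Finset.sum_congr rfl fun i _ => key i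

theorem integral_rational_eq_sum_residues_simple_poles
    (n : ℕ) (hn : 1 ≤ n) (ω : Fin n → ℂ)
    (hdist : Function.Injective ω)
    (hseg : ∀ i, ∀ x : ℝ, x ∈ Set.Icc (0 : ℝ) 1 → ω i ≠ (x : ℂ)) (m : ℕ) :
    (∫ x in (0:ℝ)..1, (x : ℂ) ^ m / ∏ i, ((x : ℂ) - ω i)) =
      ∑ i, g m (ω i) / ∏ j ∈ Finset.univ.erase i, (ω i - ω j) := by
  have huIcc : Set.uIcc (0 : ℝ) 1 = Set.Icc (0 : ℝ) 1 := Set.uIcc_of_le zero_le_one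
  have hsub : ∀ (i : Fin n) (x : ℝ), x ∈ Set.Icc (0 : ℝ) 1 → (x : ℂ) - ω i ≠ 0 := by
    intro i x hx h
    exact hseg i x hx (by linear_combination -h)
  have hint : ∀ i ∈ (Finset.univ : Finset (Fin n)), IntervalIntegrable
      (fun x : ℝ => ((x : ℂ) ^ m / ((x : ℂ) - ω i)) /
        ∏ j ∈ Finset.univ.erase i, (ω i - ω j)) MeasureTheory.volume 0 1 := by
    intro i _
    apply ContinuousOn.intervalIntegrable
    rw [huIcc]
    exact (((Complex.continuous_ofReal.pow m).continuousOn.div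
      ((Complex.continuous_ofReal.continuousOn).sub continuousOn_const)
      (hsub i)).div_const _)
  rw [intervalIntegral.integral_congr (g := fun x : ℝ =>
      ∑ i, ((x : ℂ) ^ m / ((x : ℂ) - ω i)) / ∏ j ∈ Finset.univ.erase i, (ω i - ω j))
      (fun x hx => partial_frac n hn ω hdist (x : ℂ)
        (fun i => fun h => hseg i x (huIcc ▸ hx) h.symm) m),
    intervalIntegral.integral_finset_sum hint]
  refine Finset.sum_congr rfl fun i _ => ?_
  rw [intervalIntegral.integral_div, integral_single_pole m (ω i) (hseg i)]
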